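/- Let (p,w) ∈ W and suppose the family ((λ_s, p_s, w_s, a_s)) indexed by s ∈ S is feasible at (p,w) and attains the supremum defining T(V*)(p,w). Then for every s ∈ S with λ_s > 0 and a_s ≠ a*, one has V*(p_s, w_s) = 0. -/

import Mathlib

set_option linter.unusedSectionVars false
set_option maxHeartbeats 1000000


noncomputable section

/-- Expected payoff of action `a` at belief `p` (= probability of state `ω₁`, encoded `true`). -/
def euP {A : Type*} (u : A → Bool → ℝ) (a : A) (p : ℝ) : ℝ :=
  (1 - p) * u a false + p * u a true

/-- The agent's best static payoff `m(p)` at belief `p`. -/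
def mFun {A : Type*} [Fintype A] [Nonempty A] (u : A → Bool → ℝ) (p : ℝ) : ℝ :=
  Finset.univ.sup' Finset.univ_nonempty (fun a => euP u a p)

/-- The agent's full-information payoff `M(p)` at belief `p`. -/
def MFun {A : Type*} [Fintype A] [Nonempty A] (u : A → Bool → ℝ) (p : ℝ) : ℝ :=
  (1 - p) * Finset.univ.sup' Finset.univ_nonempty (fun a => u a false)
    + p * Finset.univ.sup' Finset.univ_nonempty (fun a => u a true)

/-- The set `W` of pairs (belief, promised utility). -/
def Wset {A : Type*} [Fintype A] [Nonempty A] (u : A → Bool → ℝ) : Set (ℝ × ℝ) :=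
  {pw | pw.1 ∈ Set.Icc (0 : ℝ) 1 ∧ mFun u pw.1 ≤ pw.2 ∧ pw.2 ≤ MFun u pw.1}

/-- A family: for each signal a probability, a posterior belief, a promised continuation
utility, and a recommended action. -/
structure Fam (A S : Type*) where
  prob : S → ℝ
  belief : S → ℝ
  promise : S → ℝ
  act : S → A

/-- Feasibility of the family `f` at the point `pw = (p, w) ∈ W`. -/
def Feasible {A S : Type*} [Fintype A] [Nonempty A] [Fintype S]
    (u : A → Bool → ℝ) (δ : ℝ) (pw : ℝ × ℝ) (f : Fam A S) : Prop :=
  (∀ s, f.prob s ∈ Set.Icc (0 : ℝ) 1) ∧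
  (∀ s, (f.belief s, f.promise s) ∈ Wset u) ∧
  (∀ s, (1 - δ) * euP u (f.act s) (f.belief s) + δ * f.promise s ≥ mFun u (f.belief s)) ∧
  (∑ s, f.prob s * ((1 - δ) * euP u (f.act s) (f.belief s) + δ * f.promise s) ≥ pw.2) ∧
  (∑ s, f.prob s * f.belief s = pw.1) ∧
  (∑ s, f.prob s = 1)

/-- The principal's payoff from the family `f`, given continuation value function `V`. -/
def famPayoff {A S : Type*} [Fintype S] (v : A → Bool → ℝ) (δ : ℝ) (V : ℝ × ℝ → ℝ)
    (f : Fam A S) : ℝ :=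
  ∑ s, f.prob s * ((1 - δ) * euP v (f.act s) (f.belief s) + δ * V (f.belief s, f.promise s))

/-- The Bellman operator `T`. -/
def bellman {A S : Type*} [Fintype A] [Nonempty A] [Fintype S]
    (u v : A → Bool → ℝ) (δ : ℝ) (V : ℝ × ℝ → ℝ) (pw : ℝ × ℝ) : ℝ :=
  sSup {x | ∃ f : Fam A S, Feasible u δ pw f ∧ x = famPayoff v δ V f}

/-- `V` is bounded on `W`. -/
def BddOnW {A : Type*} [Fintype A] [Nonempty A] (u : A → Bool → ℝ) (V : ℝ × ℝ → ℝ) : Prop :=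
  ∃ C : ℝ, ∀ pw ∈ Wset u, |V pw| ≤ C

section AuxBasic

variable {A : Type*} [Fintype A] [Nonempty A]

lemma euP_le_mFun (u : A → Bool → ℝ) (a : A) (p : ℝ) : euP u a p ≤ mFun u p := by
  exact Finset.le_sup' (fun a => euP u a p) (Finset.mem_univ a)

lemma exists_eq_mFun (u : A → Bool → ℝ) (p : ℝ) : ∃ a : A, euP u a p = mFun u p := by
  obtain ⟨a, -, ha⟩ := Finset.exists_mem_eq_sup' Finset.univ_nonempty (fun a => euP u a p)
  exact ⟨a, ha.symm⟩

def maxAct (u : A → Bool → ℝ) (p : ℝ) : A := (exists_eq_mFun u p).choose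

lemma maxAct_spec (u : A → Bool → ℝ) (p : ℝ) : euP u (maxAct u p) p = mFun u p :=
  (exists_eq_mFun u p).choose_spec

/-- homogeneous averaging identity for affine functions of the belief -/
lemma affine_avg {ι : Type*} (t : Finset ι) (lam pb : ι → ℝ) (c0 c1 : ℝ)
    (hΛ : ∑ i ∈ t, lam i ≠ 0) :
    (∑ i ∈ t, lam i) * ((1 - (∑ i ∈ t, lam i * pb i) / (∑ i ∈ t, lam i)) * c0
        + ((∑ i ∈ t, lam i * pb i) / (∑ i ∈ t, lam i)) * c1)
      = ∑ i ∈ t, lam i * ((1 - pb i) * c0 + pb i * c1) := by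
  have h1 : ∑ i ∈ t, lam i * ((1 - pb i) * c0 + pb i * c1)
      = (∑ i ∈ t, lam i) * c0 + (∑ i ∈ t, lam i * pb i) * (c1 - c0) := by
    rw [Finset.sum_mul, Finset.sum_mul, ← Finset.sum_add_distrib]
    exact Finset.sum_congr rfl fun i _ => by ring
  rw [h1]
  field_simp
  ring

lemma euP_avg {ι : Type*} (u' : A → Bool → ℝ) (a : A) (t : Finset ι) (lam pb : ι → ℝ)
    (hΛ : ∑ i ∈ t, lam i ≠ 0) :
    (∑ i ∈ t, lam i) * euP u' a ((∑ i ∈ t, lam i * pb i) / (∑ i ∈ t, lam i))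
      = ∑ i ∈ t, lam i * euP u' a (pb i) := by
  simpa only [euP] using affine_avg t lam pb (u' a false) (u' a true) hΛ

lemma MFun_avg {ι : Type*} (u : A → Bool → ℝ) (t : Finset ι) (lam pb : ι → ℝ)
    (hΛ : ∑ i ∈ t, lam i ≠ 0) :
    (∑ i ∈ t, lam i) * MFun u ((∑ i ∈ t, lam i * pb i) / (∑ i ∈ t, lam i))
      = ∑ i ∈ t, lam i * MFun u (pb i) := by
  simpa only [MFun] using affine_avg t lam pb
    (Finset.univ.sup' Finset.univ_nonempty (fun a => u a false))
    (Finset.univ.sup' Finset.univ_nonempty (fun a => u a true)) hΛ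

lemma mFun_avg_le {ι : Type*} (u : A → Bool → ℝ) (t : Finset ι) (lam pb : ι → ℝ)
    (hlam : ∀ i ∈ t, 0 ≤ lam i) (hΛ : ∑ i ∈ t, lam i ≠ 0) :
    (∑ i ∈ t, lam i) * mFun u ((∑ i ∈ t, lam i * pb i) / (∑ i ∈ t, lam i))
      ≤ ∑ i ∈ t, lam i * mFun u (pb i) := by
  obtain ⟨a, ha⟩ := exists_eq_mFun u ((∑ i ∈ t, lam i * pb i) / (∑ i ∈ t, lam i))
  rw [← ha, euP_avg u a t lam pb hΛ]
  exact Finset.sum_le_sum fun i hi =>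
    mul_le_mul_of_nonneg_left (euP_le_mFun u a (pb i)) (hlam i hi)

lemma mFun_convex2 (u : A → Bool → ℝ) {x y a b : ℝ} (ha : 0 ≤ a) (hb : 0 ≤ b)
    (hab : a + b = 1) : mFun u (a * x + b * y) ≤ a * mFun u x + b * mFun u y := by
  obtain ⟨c, hc⟩ := exists_eq_mFun u (a * x + b * y)
  rw [← hc]
  have h1 : euP u c (a * x + b * y) = a * euP u c x + b * euP u c y := by
    have hb' : b = 1 - a := by linarith
    subst hb'
    simp only [euP]; ring
  rw [h1]
  have := euP_le_mFun u c x
  have := euP_le_mFun u c y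
  nlinarith

lemma MFun_affine2 (u : A → Bool → ℝ) {x y a b : ℝ} (hab : a + b = 1) :
    MFun u (a * x + b * y) = a * MFun u x + b * MFun u y := by
  have hb' : b = 1 - a := by linarith
  subst hb'
  simp only [MFun]; ring

lemma Wset_convex (u : A → Bool → ℝ) : Convex ℝ (Wset u) := by
  intro z1 h1 z2 h2 a b ha hb hab
  obtain ⟨⟨h10, h11⟩, h1m, h1M⟩ := h1
  obtain ⟨⟨h20, h21⟩, h2m, h2M⟩ := h2
  have hfst : (a • z1 + b • z2).1 = a * z1.1 + b * z2.1 := rfl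
  have hsnd : (a • z1 + b • z2).2 = a * z1.2 + b * z2.2 := rfl
  refine ⟨⟨?_, ?_⟩, ?_, ?_⟩
  · rw [hfst]; nlinarith
  · rw [hfst]; nlinarith
  · rw [hfst, hsnd]
    calc mFun u (a * z1.1 + b * z2.1) ≤ a * mFun u z1.1 + b * mFun u z2.1 :=
          mFun_convex2 u ha hb hab
      _ ≤ a * z1.2 + b * z2.2 := by nlinarith
  · rw [hfst, hsnd, MFun_affine2 u hab]
    nlinarith

lemma mFun_zero (u : A → Bool → ℝ) :
    mFun u 0 = Finset.univ.sup' Finset.univ_nonempty (fun a => u a false) := by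
  have : (fun a : A => euP u a 0) = fun a => u a false := by
    funext a; simp [euP]
  rw [mFun, this]

lemma mFun_one (u : A → Bool → ℝ) :
    mFun u 1 = Finset.univ.sup' Finset.univ_nonempty (fun a => u a true) := by
  have : (fun a : A => euP u a 1) = fun a => u a true := by
    funext a; simp [euP]
  rw [mFun, this]

lemma mFun_zero_eq (u : A → Bool → ℝ) : mFun u 0 = MFun u 0 := by
  rw [mFun_zero, MFun]; ring

lemma mFun_one_eq (u : A → Bool → ℝ) : mFun u 1 = MFun u 1 := by
  rw [mFun_one, MFun]; ring

lemma Wset_basept (u : A → Bool → ℝ) : ((0 : ℝ), mFun u 0) ∈ Wset u := by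
  refine ⟨⟨le_refl 0, by norm_num⟩, le_refl _, le_of_eq (mFun_zero_eq u)⟩

/-- uniform bound for `euP v` over beliefs in `[0,1]` -/
def KvB {A : Type*} [Fintype A] [Nonempty A] (v : A → Bool → ℝ) : ℝ :=
  Finset.univ.sup' Finset.univ_nonempty (fun a => |v a false| + |v a true|)

lemma abs_euP_le (v : A → Bool → ℝ) (a : A) {p : ℝ} (h0 : 0 ≤ p) (h1 : p ≤ 1) :
    |euP v a p| ≤ KvB v := by
  have h2 : |euP v a p| ≤ (1 - p) * |v a false| + p * |v a true| := by
    calc |euP v a p| ≤ |(1 - p) * v a false| + |p * v a true| := abs_add_le _ _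
      _ = (1 - p) * |v a false| + p * |v a true| := by
          rw [abs_mul, abs_mul, abs_of_nonneg (by linarith : (0:ℝ) ≤ 1 - p),
            abs_of_nonneg h0]
  have h3 : (1 - p) * |v a false| + p * |v a true| ≤ |v a false| + |v a true| := by
    nlinarith [abs_nonneg (v a false), abs_nonneg (v a true)]
  have h4 : |v a false| + |v a true| ≤ KvB v :=
    Finset.le_sup' (f := fun a => |v a false| + |v a true|) (Finset.mem_univ a)
  linarith

lemma KvB_nonneg (v : A → Bool → ℝ) : 0 ≤ KvB v := by
  have := abs_euP_le v (Classical.arbitrary A) (le_refl (0:ℝ)) (by norm_num)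
  exact le_trans (abs_nonneg _) this

end AuxBasic

section FamAux

variable {A S : Type*} [Fintype A] [Nonempty A] [Fintype S] [DecidableEq S]

/-- the full-revelation family -/
def fullRev (u : A → Bool → ℝ) (s0 s1 : S) (z : ℝ × ℝ) : Fam A S where
  prob s := if s = s1 then z.1 else if s = s0 then 1 - z.1 else 0
  belief s := if s = s1 then 1 else 0
  promise s := if s = s1 then mFun u 1 else mFun u 0
  act s := if s = s1 then maxAct u 1 else maxAct u 0

lemma fullRev_feasible (u : A → Bool → ℝ) (δ : ℝ) {s0 s1 : S} (h01 : s0 ≠ s1)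
    {z : ℝ × ℝ} (hz : z ∈ Wset u) : Feasible u δ z (fullRev u s0 s1 z) := by
  classical
  obtain ⟨⟨hz0, hz1⟩, hzm, hzM⟩ := hz
  have hbel1 : (fullRev u s0 s1 z).belief s1 = 1 := by simp [fullRev]
  have hbel0 : (fullRev u s0 s1 z).belief s0 = 0 := by simp [fullRev, h01]
  have hd : ∀ s : S, (1 - δ) * euP u ((fullRev u s0 s1 z).act s) ((fullRev u s0 s1 z).belief s)
      + δ * (fullRev u s0 s1 z).promise s = mFun u ((fullRev u s0 s1 z).belief s) := by
    intro s
    by_cases h : s = s1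
    · subst h; simp only [fullRev, if_pos rfl, eq_self_iff_true, if_true]
      rw [maxAct_spec]; ring
    · simp only [fullRev, if_neg h]; rw [maxAct_spec]; ring
  have hsum2 : ∀ H : S → ℝ, (∑ s, (fullRev u s0 s1 z).prob s * H s)
      = z.1 * H s1 + (1 - z.1) * H s0 := by
    intro H
    rw [← Finset.sum_subset (Finset.subset_univ {s0, s1})]
    · rw [Finset.sum_pair h01]
      have h10 : ¬ (s0 = s1) := h01
      simp only [fullRev, if_pos rfl, if_neg h10, eq_self_iff_true, if_true]
      ring
    · intro s _ hs
      simp only [Finset.mem_insert, Finset.mem_singleton, not_or] at hs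
      simp only [fullRev, if_neg hs.2, if_neg hs.1, zero_mul]
  refine ⟨?_, ?_, ?_, ?_, ?_, ?_⟩
  · intro s
    simp only [fullRev, Set.mem_Icc]
    by_cases h : s = s1
    · subst h; simp only [if_pos rfl, eq_self_iff_true, if_true]; exact ⟨hz0, hz1⟩
    · rw [if_neg h]
      by_cases h' : s = s0
      · subst h'; simp only [if_pos rfl, eq_self_iff_true, if_true]; constructor <;> linarith
      · rw [if_neg h']; constructor <;> linarith
  · intro s
    by_cases h : s = s1
    · subst h; simp only [fullRev, if_pos rfl, eq_self_iff_true, if_true]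
      exact ⟨⟨by norm_num, le_refl 1⟩, le_refl _, le_of_eq (mFun_one_eq u)⟩
    · simp only [fullRev, if_neg h]
      exact ⟨⟨le_refl 0, by norm_num⟩, le_refl _, le_of_eq (mFun_zero_eq u)⟩
  · intro s; rw [hd s]
  · have h4 : (∑ s, (fullRev u s0 s1 z).prob s * ((1 - δ) * euP u ((fullRev u s0 s1 z).act s)
        ((fullRev u s0 s1 z).belief s) + δ * (fullRev u s0 s1 z).promise s))
        = z.1 * ((1 - δ) * euP u ((fullRev u s0 s1 z).act s1) ((fullRev u s0 s1 z).belief s1)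
            + δ * (fullRev u s0 s1 z).promise s1)
          + (1 - z.1) * ((1 - δ) * euP u ((fullRev u s0 s1 z).act s0)
              ((fullRev u s0 s1 z).belief s0) + δ * (fullRev u s0 s1 z).promise s0) := hsum2 _
    rw [ge_iff_le, h4, hd s1, hd s0, hbel1, hbel0, mFun_one, mFun_zero]
    rw [MFun] at hzM
    linarith
  · have h5 : (∑ s, (fullRev u s0 s1 z).prob s * (fullRev u s0 s1 z).belief s)
        = z.1 * (fullRev u s0 s1 z).belief s1 + (1 - z.1) * (fullRev u s0 s1 z).belief s0 :=
      hsum2 _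
    rw [h5, hbel1, hbel0]; ring
  · have h6 : (∑ s, (fullRev u s0 s1 z).prob s * 1) = z.1 * 1 + (1 - z.1) * 1 := hsum2 _
    simp only [mul_one] at h6
    rw [h6]; ring

lemma bellman_set_nonempty (u v : A → Bool → ℝ) (δ : ℝ) (V : ℝ × ℝ → ℝ)
    {s0 s1 : S} (h01 : s0 ≠ s1) {z : ℝ × ℝ} (hz : z ∈ Wset u) :
    {x | ∃ f : Fam A S, Feasible u δ z f ∧ x = famPayoff v δ V f}.Nonempty :=
  ⟨famPayoff v δ V (fullRev u s0 s1 z), fullRev u s0 s1 z, fullRev_feasible u δ h01 hz, rfl⟩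

lemma famPayoff_abs_le (u v : A → Bool → ℝ) (δ : ℝ) (V : ℝ × ℝ → ℝ) {C : ℝ}
    (hC : ∀ y ∈ Wset u, |V y| ≤ C) (hδ0 : 0 ≤ δ) (hδ1 : δ ≤ 1)
    {z : ℝ × ℝ} {f : Fam A S} (hf : Feasible u δ z f) :
    |famPayoff v δ V f| ≤ (1 - δ) * KvB v + δ * C := by
  obtain ⟨hp, hW, -, -, -, hT⟩ := hf
  have hterm : ∀ s, |f.prob s * ((1 - δ) * euP v (f.act s) (f.belief s)
      + δ * V (f.belief s, f.promise s))| ≤ f.prob s * ((1 - δ) * KvB v + δ * C) := by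
    intro s
    rw [abs_mul, abs_of_nonneg (hp s).1]
    refine mul_le_mul_of_nonneg_left ?_ (hp s).1
    calc |(1 - δ) * euP v (f.act s) (f.belief s) + δ * V (f.belief s, f.promise s)|
        ≤ |(1 - δ) * euP v (f.act s) (f.belief s)| + |δ * V (f.belief s, f.promise s)| :=
          abs_add_le _ _
      _ ≤ (1 - δ) * KvB v + δ * C := by
          rw [abs_mul, abs_mul, abs_of_nonneg (by linarith : (0:ℝ) ≤ 1 - δ),
            abs_of_nonneg hδ0]
          have h1 := abs_euP_le v (f.act s) ((hW s).1.1) ((hW s).1.2)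
          have h2 := hC _ (hW s)
          have hd : (0:ℝ) ≤ 1 - δ := by linarith
          nlinarith
  calc |famPayoff v δ V f| ≤ ∑ s, |f.prob s * ((1 - δ) * euP v (f.act s) (f.belief s)
        + δ * V (f.belief s, f.promise s))| := Finset.abs_sum_le_sum_abs _ _
    _ ≤ ∑ s, f.prob s * ((1 - δ) * KvB v + δ * C) := Finset.sum_le_sum fun s _ => hterm s
    _ = (1 - δ) * KvB v + δ * C := by rw [← Finset.sum_mul, hT, one_mul]

lemma bellman_set_bddAbove (u v : A → Bool → ℝ) (δ : ℝ) (V : ℝ × ℝ → ℝ) {C : ℝ}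
    (hC : ∀ y ∈ Wset u, |V y| ≤ C) (hδ0 : 0 ≤ δ) (hδ1 : δ ≤ 1) (z : ℝ × ℝ) :
    BddAbove {x | ∃ f : Fam A S, Feasible u δ z f ∧ x = famPayoff v δ V f} := by
  refine ⟨(1 - δ) * KvB v + δ * C, fun x hx => ?_⟩
  obtain ⟨f, hf, rfl⟩ := hx
  exact (abs_le.mp (famPayoff_abs_le u v δ V hC hδ0 hδ1 hf)).2

lemma le_bellman (u v : A → Bool → ℝ) (δ : ℝ) (V : ℝ × ℝ → ℝ) {C : ℝ}
    (hC : ∀ y ∈ Wset u, |V y| ≤ C) (hδ0 : 0 ≤ δ) (hδ1 : δ ≤ 1)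
    {z : ℝ × ℝ} {f : Fam A S} (hf : Feasible u δ z f) :
    famPayoff v δ V f ≤ bellman (S := S) u v δ V z :=
  le_csSup (bellman_set_bddAbove u v δ V hC hδ0 hδ1 z) ⟨f, hf, rfl⟩

lemma abs_bellman_le (u v : A → Bool → ℝ) (δ : ℝ) (V : ℝ × ℝ → ℝ) {C : ℝ}
    (hC : ∀ y ∈ Wset u, |V y| ≤ C) (hδ0 : 0 ≤ δ) (hδ1 : δ ≤ 1)
    {s0 s1 : S} (h01 : s0 ≠ s1) {z : ℝ × ℝ} (hz : z ∈ Wset u) :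
    |bellman (S := S) u v δ V z| ≤ (1 - δ) * KvB v + δ * C := by
  rw [abs_le]
  constructor
  · have h1 := le_bellman u v δ V hC hδ0 hδ1 (fullRev_feasible u δ h01 hz)
    have h2 := famPayoff_abs_le u v δ V hC hδ0 hδ1 (fullRev_feasible (S := S) u δ h01 hz)
    have := (abs_le.mp h2).1
    linarith
  · exact csSup_le (bellman_set_nonempty u v δ V h01 hz) fun x hx => by
      obtain ⟨f, hf, rfl⟩ := hx
      exact (abs_le.mp (famPayoff_abs_le u v δ V hC hδ0 hδ1 hf)).2

lemma famPayoff_nonneg (u v : A → Bool → ℝ) (δ : ℝ) (V : ℝ × ℝ → ℝ)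
    (hv : ∀ a b, 0 ≤ v a b) (hV : ∀ y ∈ Wset u, 0 ≤ V y) (hδ0 : 0 ≤ δ) (hδ1 : δ ≤ 1)
    {z : ℝ × ℝ} {f : Fam A S} (hf : Feasible u δ z f) :
    0 ≤ famPayoff v δ V f := by
  obtain ⟨hp, hW, -, -, -, -⟩ := hf
  refine Finset.sum_nonneg fun s _ => mul_nonneg (hp s).1 ?_
  have h1 : 0 ≤ euP v (f.act s) (f.belief s) := by
    have h0 := (hW s).1.1
    have h1' := (hW s).1.2
    have := hv (f.act s) false
    have := hv (f.act s) true
    simp only [euP]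
    nlinarith
  have h2 := hV _ (hW s)
  nlinarith

lemma bellman_nonneg (u v : A → Bool → ℝ) (δ : ℝ) (V : ℝ × ℝ → ℝ) {C : ℝ}
    (hC : ∀ y ∈ Wset u, |V y| ≤ C)
    (hv : ∀ a b, 0 ≤ v a b) (hV : ∀ y ∈ Wset u, 0 ≤ V y) (hδ0 : 0 ≤ δ) (hδ1 : δ ≤ 1)
    {s0 s1 : S} (h01 : s0 ≠ s1) {z : ℝ × ℝ} (hz : z ∈ Wset u) :
    0 ≤ bellman (S := S) u v δ V z :=
  le_trans (famPayoff_nonneg u v δ V hv hV hδ0 hδ1 (fullRev_feasible u δ h01 hz))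
    (le_bellman u v δ V hC hδ0 hδ1 (fullRev_feasible u δ h01 hz))

lemma famPayoff_diff {A S : Type*} [Fintype S] (v : A → Bool → ℝ) (δ : ℝ)
    (V V' : ℝ × ℝ → ℝ) (f : Fam A S) :
    famPayoff v δ V f - famPayoff v δ V' f
      = δ * ∑ s, f.prob s * (V (f.belief s, f.promise s) - V' (f.belief s, f.promise s)) := by
  simp only [famPayoff, Finset.mul_sum, ← Finset.sum_sub_distrib]
  exact Finset.sum_congr rfl fun s _ => by ring

lemma bellman_contract (u v : A → Bool → ℝ) (δ : ℝ) (V V' : ℝ × ℝ → ℝ) {C C' d : ℝ}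
    (hC : ∀ y ∈ Wset u, |V y| ≤ C) (hC' : ∀ y ∈ Wset u, |V' y| ≤ C')
    (hδ0 : 0 ≤ δ) (hδ1 : δ ≤ 1) (hd : 0 ≤ d)
    (hdiff : ∀ y ∈ Wset u, |V y - V' y| ≤ d)
    {s0 s1 : S} (h01 : s0 ≠ s1) {z : ℝ × ℝ} (hz : z ∈ Wset u) :
    |bellman (S := S) u v δ V z - bellman (S := S) u v δ V' z| ≤ δ * d := by
  have key : ∀ (W1 W2 : ℝ × ℝ → ℝ) (CC : ℝ), (∀ y ∈ Wset u, |W2 y| ≤ CC) →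
      (∀ y ∈ Wset u, |W1 y - W2 y| ≤ d) →
      bellman (S := S) u v δ W1 z ≤ bellman (S := S) u v δ W2 z + δ * d := by
    intro W1 W2 CC hCC hdd
    refine csSup_le (bellman_set_nonempty u v δ W1 h01 hz) fun x hx => ?_
    obtain ⟨f, hf, rfl⟩ := hx
    have h1 : famPayoff v δ W1 f - famPayoff v δ W2 f ≤ δ * d := by
      rw [famPayoff_diff]
      refine mul_le_mul_of_nonneg_left ?_ hδ0
      have hT := hf.2.2.2.2.2
      calc ∑ s, f.prob s * (W1 (f.belief s, f.promise s) - W2 (f.belief s, f.promise s))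
          ≤ ∑ s, f.prob s * d := Finset.sum_le_sum fun s _ =>
            mul_le_mul_of_nonneg_left
              (le_trans (le_abs_self _) (hdd _ (hf.2.1 s))) (hf.1 s).1
        _ = d := by rw [← Finset.sum_mul, hT, one_mul]
    have h2 := le_bellman u v δ W2 hCC hδ0 hδ1 hf
    linarith
  have k1 := key V V' C' hC' hdiff
  have k2 := key V' V C hC fun y hy => by rw [abs_sub_comm]; exact hdiff y hy
  rw [abs_le]
  constructor <;> linarith

end FamAux

section Compress

variable {A S : Type*} [Fintype A] [Nonempty A] [Fintype S]

lemma compress {ι : Type*} [Fintype ι] (u v : A → Bool → ℝ) (δ : ℝ) (V : ℝ × ℝ → ℝ)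
    (e : A ↪ S) (hδ0 : 0 ≤ δ) (hδ1 : δ ≤ 1)
    (hV : ConcaveOn ℝ (Wset u) V)
    {z : ℝ × ℝ} (hz : z ∈ Wset u) {g : Fam A ι} (hg : Feasible u δ z g) :
    ∃ f : Fam A S, Feasible u δ z f ∧ famPayoff v δ V g ≤ famPayoff v δ V f := by
  classical
  obtain ⟨hgp, hgW, hgO, hgPK, hgB, hgT⟩ := hg
  have hp0 : ∀ i, 0 ≤ g.prob i := fun i => (hgp i).1
  set φ : ι → S := fun i => e (g.act i) with hφ
  set F : S → Finset ι := fun s => Finset.univ.filter (fun i => φ i = s) with hF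
  have sum_fib : ∀ h : ι → ℝ, (∑ s, ∑ i ∈ F s, h i) = ∑ i, h i := fun h =>
    Finset.sum_fiberwise Finset.univ φ h
  set Λ : S → ℝ := fun s => ∑ i ∈ F s, g.prob i with hΛdef
  set P : S → ℝ := fun s => ∑ i ∈ F s, g.prob i * g.belief i with hPdef
  set X : S → ℝ := fun s => ∑ i ∈ F s, g.prob i * g.promise i with hXdef
  have hΛ0 : ∀ s, 0 ≤ Λ s := fun s => Finset.sum_nonneg fun i _ => hp0 i
  have hzero : ∀ s, Λ s = 0 → ∀ i ∈ F s, g.prob i = 0 := fun s h =>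
    (Finset.sum_eq_zero_iff_of_nonneg fun i _ => hp0 i).1 h
  have hι : Nonempty ι := by
    have h1 : (∑ i, g.prob i) ≠ 0 := by rw [hgT]; norm_num
    obtain ⟨i, -, -⟩ := Finset.exists_ne_zero_of_sum_ne_zero h1
    exact ⟨i⟩
  set pick : S → ι := fun s => if h : (F s).Nonempty then h.choose else Classical.arbitrary ι
    with hpick
  have hpickmem : ∀ s, (F s).Nonempty → pick s ∈ F s := by
    intro s hne
    simp only [hpick, dif_pos hne]
    exact hne.choose_spec
  have hactfib : ∀ s, ∀ i ∈ F s, g.act i = g.act (pick s) := by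
    intro s i hi
    have hne : (F s).Nonempty := ⟨i, hi⟩
    have h1 : φ i = s := (Finset.mem_filter.mp hi).2
    have h2 : φ (pick s) = s := (Finset.mem_filter.mp (hpickmem s hne)).2
    exact e.injective (h1.trans h2.symm)
  -- the compressed family
  set f : Fam A S :=
    ⟨Λ, fun s => if Λ s = 0 then z.1 else P s / Λ s,
        fun s => if Λ s = 0 then z.2 else X s / Λ s,
        fun s => if Λ s = 0 then maxAct u z.1 else g.act (pick s)⟩ with hf
  have hΛpos : ∀ s, Λ s ≠ 0 → 0 < Λ s := fun s hs => lt_of_le_of_ne (hΛ0 s) (Ne.symm hs)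
  -- per-branch facts in the nonzero case
  have heuP : ∀ (u' : A → Bool → ℝ) (s), Λ s ≠ 0 →
      Λ s * euP u' (g.act (pick s)) (P s / Λ s)
        = ∑ i ∈ F s, g.prob i * euP u' (g.act i) (g.belief i) := by
    intro u' s hs
    have h1 : ∑ i ∈ F s, g.prob i * euP u' (g.act i) (g.belief i)
        = ∑ i ∈ F s, g.prob i * euP u' (g.act (pick s)) (g.belief i) :=
      Finset.sum_congr rfl fun i hi => by rw [hactfib s i hi]
    rw [h1, ← euP_avg u' (g.act (pick s)) (F s) g.prob g.belief hs]
  have hm : ∀ s, Λ s ≠ 0 →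
      Λ s * mFun u (P s / Λ s) ≤ ∑ i ∈ F s, g.prob i * mFun u (g.belief i) :=
    fun s hs => mFun_avg_le u (F s) g.prob g.belief (fun i _ => hp0 i) hs
  have hM : ∀ s, Λ s ≠ 0 →
      Λ s * MFun u (P s / Λ s) = ∑ i ∈ F s, g.prob i * MFun u (g.belief i) :=
    fun s hs => MFun_avg u (F s) g.prob g.belief hs
  have hXid : ∀ s, Λ s ≠ 0 → Λ s * (X s / Λ s) = X s := fun s hs => by
    field_simp
  have hVconc : ∀ s, Λ s ≠ 0 →
      ∑ i ∈ F s, g.prob i * V (g.belief i, g.promise i) ≤ Λ s * V (P s / Λ s, X s / Λ s) := by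
    intro s hs
    have hpos := hΛpos s hs
    have hcm : (F s).centerMass g.prob (fun i => ((g.belief i, g.promise i) : ℝ × ℝ))
        = (P s / Λ s, X s / Λ s) := by
      simp only [Finset.centerMass]
      have h1 : (∑ i ∈ F s, g.prob i • ((g.belief i, g.promise i) : ℝ × ℝ))
          = (P s, X s) := by
        rw [Prod.ext_iff]
        constructor
        · rw [Prod.fst_sum]; simp only [Prod.smul_mk, smul_eq_mul]; rfl
        · rw [Prod.snd_sum]; simp only [Prod.smul_mk, smul_eq_mul]; rfl
      rw [h1, Prod.smul_mk, smul_eq_mul, smul_eq_mul, inv_mul_eq_div, inv_mul_eq_div]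
    have hjen := hV.le_map_centerMass (t := F s) (w := g.prob)
      (p := fun i => ((g.belief i, g.promise i) : ℝ × ℝ))
      (fun i _ => hp0 i) hpos (fun i _ => hgW i)
    rw [hcm] at hjen
    have h2 : (F s).centerMass g.prob (fun i => V (g.belief i, g.promise i))
        = (Λ s)⁻¹ * ∑ i ∈ F s, g.prob i * V (g.belief i, g.promise i) := by
      simp only [Finset.centerMass, smul_eq_mul]
      rfl
    have h3 : (F s).centerMass g.prob ((fun y => V y) ∘ fun i => ((g.belief i, g.promise i) : ℝ × ℝ))
        = (Λ s)⁻¹ * ∑ i ∈ F s, g.prob i * V (g.belief i, g.promise i) := h2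
    rw [h3] at hjen
    have h4 := mul_le_mul_of_nonneg_left hjen (le_of_lt hpos)
    rw [← mul_assoc, mul_inv_cancel₀ hs, one_mul] at h4
    exact h4
  -- per-branch aggregate identities (all cases)
  have hdel : ∀ s, Λ s * ((1 - δ) * euP u (f.act s) (f.belief s) + δ * f.promise s)
      = ∑ i ∈ F s, g.prob i * ((1 - δ) * euP u (g.act i) (g.belief i) + δ * g.promise i) := by
    intro s
    by_cases hs : Λ s = 0
    · rw [hs, zero_mul]
      exact (Finset.sum_eq_zero fun i hi => by rw [hzero s hs i hi, zero_mul]).symm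
    · simp only [hf, if_neg hs]
      have hsplit : ∑ i ∈ F s, g.prob i * ((1 - δ) * euP u (g.act i) (g.belief i)
          + δ * g.promise i)
          = (1 - δ) * ∑ i ∈ F s, g.prob i * euP u (g.act i) (g.belief i)
            + δ * ∑ i ∈ F s, g.prob i * g.promise i := by
        rw [Finset.mul_sum, Finset.mul_sum, ← Finset.sum_add_distrib]
        exact Finset.sum_congr rfl fun i _ => by ring
      rw [hsplit, ← heuP u s hs]
      linear_combination δ * hXid s hs
  have hbay : ∀ s, Λ s * f.belief s = P s := by
    intro s
    by_cases hs : Λ s = 0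
    · rw [hs, zero_mul]
      exact (Finset.sum_eq_zero fun i hi => by rw [hzero s hs i hi, zero_mul]).symm
    · simp only [hf, if_neg hs]
      field_simp
  have hpay : ∀ s, ∑ i ∈ F s, g.prob i * ((1 - δ) * euP v (g.act i) (g.belief i)
      + δ * V (g.belief i, g.promise i))
      ≤ Λ s * ((1 - δ) * euP v (f.act s) (f.belief s) + δ * V (f.belief s, f.promise s)) := by
    intro s
    by_cases hs : Λ s = 0
    · rw [hs, zero_mul]
      exact le_of_eq (Finset.sum_eq_zero fun i hi => by rw [hzero s hs i hi, zero_mul])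
    · simp only [hf, if_neg hs]
      have hsplit : ∑ i ∈ F s, g.prob i * ((1 - δ) * euP v (g.act i) (g.belief i)
          + δ * V (g.belief i, g.promise i))
          = (1 - δ) * ∑ i ∈ F s, g.prob i * euP v (g.act i) (g.belief i)
            + δ * ∑ i ∈ F s, g.prob i * V (g.belief i, g.promise i) := by
        rw [Finset.mul_sum, Finset.mul_sum, ← Finset.sum_add_distrib]
        exact Finset.sum_congr rfl fun i _ => by ring
      rw [hsplit, ← heuP v s hs]
      have h2 := hVconc s hs
      nlinarith [h2, hδ0]
  have hT : ∑ s, Λ s = 1 := by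
    have := sum_fib g.prob
    rw [← this] at hgT
    exact hgT
  refine ⟨f, ⟨?_, ?_, ?_, ?_, ?_, ?_⟩, ?_⟩
  · -- probabilities in [0,1]
    intro s
    refine ⟨hΛ0 s, ?_⟩
    calc Λ s ≤ ∑ s', Λ s' := Finset.single_le_sum (fun s' _ => hΛ0 s') (Finset.mem_univ s)
      _ = 1 := hT
  · -- branch points in W
    intro s
    by_cases hs : Λ s = 0
    · simp only [hf, if_pos hs]
      exact Prod.mk.eta.symm ▸ hz
    · simp only [hf, if_neg hs]
      have hpos := hΛpos s hs
      have hP0 : 0 ≤ P s := Finset.sum_nonneg fun i _ =>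
        mul_nonneg (hp0 i) ((hgW i).1.1)
      have hPle : P s ≤ Λ s := Finset.sum_le_sum fun i _ => by
        have := (hgW i).1.2
        nlinarith [hp0 i]
      refine ⟨⟨div_nonneg hP0 (hΛ0 s), (div_le_one hpos).2 hPle⟩, ?_, ?_⟩
      · have h1 : Λ s * mFun u (P s / Λ s) ≤ X s := by
          refine le_trans (hm s hs) (Finset.sum_le_sum fun i _ => ?_)
          exact mul_le_mul_of_nonneg_left (hgW i).2.1 (hp0 i)
        rw [le_div_iff₀ hpos]
        linarith
      · have h1 : X s ≤ Λ s * MFun u (P s / Λ s) := by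
          rw [hM s hs]
          refine Finset.sum_le_sum fun i _ => ?_
          exact mul_le_mul_of_nonneg_left (hgW i).2.2 (hp0 i)
        rw [div_le_iff₀ hpos]
        linarith
  · -- obedience
    intro s
    by_cases hs : Λ s = 0
    · simp only [hf, if_pos hs]
      rw [ge_iff_le, maxAct_spec]
      have h1 := hz.2.1
      nlinarith
    · have hpos := hΛpos s hs
      rw [ge_iff_le, ← mul_le_mul_iff_right₀ hpos]
      have h1 : Λ s * mFun u (f.belief s) ≤ ∑ i ∈ F s, g.prob i * mFun u (g.belief i) := by
        simp only [hf, if_neg hs]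
        exact hm s hs
      refine le_trans h1 ?_
      rw [hdel s]
      exact Finset.sum_le_sum fun i _ => mul_le_mul_of_nonneg_left (hgO i) (hp0 i)
  · -- promise keeping
    rw [ge_iff_le]
    have h1 : ∑ s, f.prob s * ((1 - δ) * euP u (f.act s) (f.belief s) + δ * f.promise s)
        = ∑ i, g.prob i * ((1 - δ) * euP u (g.act i) (g.belief i) + δ * g.promise i) := by
      rw [← sum_fib (fun i => g.prob i * ((1 - δ) * euP u (g.act i) (g.belief i)
        + δ * g.promise i))]
      exact Finset.sum_congr rfl fun s _ => hdel s
    rw [h1]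
    exact hgPK
  · -- Bayes plausibility
    have h1 : ∑ s, f.prob s * f.belief s = ∑ i, g.prob i * g.belief i := by
      rw [← sum_fib (fun i => g.prob i * g.belief i)]
      exact Finset.sum_congr rfl fun s _ => hbay s
    rw [h1]
    exact hgB
  · exact hT
  · -- payoff comparison
    rw [famPayoff, famPayoff, ← sum_fib (fun i => g.prob i * ((1 - δ) * euP v (g.act i)
      (g.belief i) + δ * V (g.belief i, g.promise i)))]
    exact Finset.sum_le_sum fun s _ => hpay s

end Compress

section ConcavePreserve

variable {A S : Type*} [Fintype A] [Nonempty A] [Fintype S] [DecidableEq S]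

/-- combining two families with outer weights -/
def combFam {A S : Type*} (a b : ℝ) (f1 f2 : Fam A S) : Fam A (S ⊕ S) where
  prob := Sum.elim (fun s => a * f1.prob s) (fun s => b * f2.prob s)
  belief := Sum.elim f1.belief f2.belief
  promise := Sum.elim f1.promise f2.promise
  act := Sum.elim f1.act f2.act

lemma combFam_feasible (u : A → Bool → ℝ) (δ : ℝ) {a b : ℝ} (ha : 0 ≤ a) (hb : 0 ≤ b)
    (hab : a + b = 1) {z1 z2 : ℝ × ℝ} {f1 f2 : Fam A S}
    (h1 : Feasible u δ z1 f1) (h2 : Feasible u δ z2 f2) :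
    Feasible u δ (a • z1 + b • z2) (combFam a b f1 f2) := by
  obtain ⟨h1p, h1W, h1O, h1PK, h1B, h1T⟩ := h1
  obtain ⟨h2p, h2W, h2O, h2PK, h2B, h2T⟩ := h2
  have hfst : (a • z1 + b • z2).1 = a * z1.1 + b * z2.1 := rfl
  have hsnd : (a • z1 + b • z2).2 = a * z1.2 + b * z2.2 := rfl
  refine ⟨?_, ?_, ?_, ?_, ?_, ?_⟩
  · rintro (s | s) <;> simp only [combFam, Sum.elim_inl, Sum.elim_inr, Set.mem_Icc]
    · have := (h1p s).1; have := (h1p s).2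
      constructor
      · positivity
      · nlinarith
    · have := (h2p s).1; have := (h2p s).2
      constructor
      · positivity
      · nlinarith
  · rintro (s | s) <;> simp only [combFam, Sum.elim_inl, Sum.elim_inr]
    · exact h1W s
    · exact h2W s
  · rintro (s | s) <;> simp only [combFam, Sum.elim_inl, Sum.elim_inr]
    · exact h1O s
    · exact h2O s
  · rw [ge_iff_le, hsnd, Fintype.sum_sum_type]
    simp only [combFam, Sum.elim_inl, Sum.elim_inr]
    have e1 : ∑ s : S, a * f1.prob s * ((1 - δ) * euP u (f1.act s) (f1.belief s)
        + δ * f1.promise s) = a * ∑ s : S, f1.prob s * ((1 - δ) * euP u (f1.act s)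
        (f1.belief s) + δ * f1.promise s) := by
      rw [Finset.mul_sum]; exact Finset.sum_congr rfl fun s _ => by ring
    have e2 : ∑ s : S, b * f2.prob s * ((1 - δ) * euP u (f2.act s) (f2.belief s)
        + δ * f2.promise s) = b * ∑ s : S, f2.prob s * ((1 - δ) * euP u (f2.act s)
        (f2.belief s) + δ * f2.promise s) := by
      rw [Finset.mul_sum]; exact Finset.sum_congr rfl fun s _ => by ring
    rw [e1, e2]
    nlinarith [h1PK, h2PK]
  · rw [hfst, Fintype.sum_sum_type]
    simp only [combFam, Sum.elim_inl, Sum.elim_inr]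
    have e1 : ∑ s : S, a * f1.prob s * f1.belief s = a * ∑ s : S, f1.prob s * f1.belief s := by
      rw [Finset.mul_sum]; exact Finset.sum_congr rfl fun s _ => by ring
    have e2 : ∑ s : S, b * f2.prob s * f2.belief s = b * ∑ s : S, f2.prob s * f2.belief s := by
      rw [Finset.mul_sum]; exact Finset.sum_congr rfl fun s _ => by ring
    rw [e1, e2, h1B, h2B]
  · rw [Fintype.sum_sum_type]
    simp only [combFam, Sum.elim_inl, Sum.elim_inr]
    rw [← Finset.mul_sum, ← Finset.mul_sum, h1T, h2T]
    simpa using hab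
  
lemma combFam_payoff (v : A → Bool → ℝ) (δ : ℝ) (V : ℝ × ℝ → ℝ) (a b : ℝ)
    (f1 f2 : Fam A S) :
    famPayoff v δ V (combFam a b f1 f2) = a * famPayoff v δ V f1 + b * famPayoff v δ V f2 := by
  rw [famPayoff, Fintype.sum_sum_type]
  simp only [combFam, Sum.elim_inl, Sum.elim_inr]
  rw [famPayoff, famPayoff, Finset.mul_sum, Finset.mul_sum]
  congr 1 <;> exact Finset.sum_congr rfl fun s _ => by ring

lemma bellman_concaveOn (u v : A → Bool → ℝ) (δ : ℝ) (V : ℝ × ℝ → ℝ) (e : A ↪ S)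
    {C : ℝ} (hC : ∀ y ∈ Wset u, |V y| ≤ C) (hδ0 : 0 ≤ δ) (hδ1 : δ ≤ 1)
    {s0 s1 : S} (h01 : s0 ≠ s1) (hV : ConcaveOn ℝ (Wset u) V) :
    ConcaveOn ℝ (Wset u) (bellman (S := S) u v δ V) := by
  refine ⟨Wset_convex u, fun x hx y hy a b ha hb hab => ?_⟩
  have hzbar : a • x + b • y ∈ Wset u := Wset_convex u hx hy ha hb hab
  simp only [smul_eq_mul]
  refine le_of_forall_pos_le_add fun ε hε => ?_
  -- pick near-optimal families at x and y
  have hne1 := bellman_set_nonempty (S := S) u v δ V h01 hx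
  have hne2 := bellman_set_nonempty (S := S) u v δ V h01 hy
  have key : ∀ w : ℝ × ℝ, w ∈ Wset u → ∃ f : Fam A S, Feasible u δ w f ∧
      bellman (S := S) u v δ V w - ε ≤ famPayoff v δ V f := by
    intro w hw
    obtain ⟨t, ht, htlt⟩ := exists_lt_of_lt_csSup (bellman_set_nonempty (S := S) u v δ V h01 hw)
      (show bellman (S := S) u v δ V w - ε < bellman (S := S) u v δ V w by linarith)
    obtain ⟨f, hf, rfl⟩ := ht
    exact ⟨f, hf, le_of_lt htlt⟩
  obtain ⟨f1, hf1, hp1⟩ := key x hx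
  obtain ⟨f2, hf2, hp2⟩ := key y hy
  have hcomb := combFam_feasible u δ ha hb hab hf1 hf2
  obtain ⟨f', hf', hpay'⟩ := compress u v δ V e hδ0 hδ1 hV hzbar hcomb
  have h3 : famPayoff v δ V f' ≤ bellman (S := S) u v δ V (a • x + b • y) :=
    le_bellman u v δ V hC hδ0 hδ1 hf'
  rw [combFam_payoff] at hpay'
  nlinarith [hp1, hp2, hpay', h3]

end ConcavePreserve

lemma zero_of_abs_le_geom {δ c G' : ℝ} (hδ0 : 0 ≤ δ) (hδ1 : δ < 1)
    (h : ∀ n : ℕ, |c| ≤ G' * δ ^ n) : c = 0 := by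
  have h0 : Filter.Tendsto (fun n : ℕ => G' * δ ^ n) Filter.atTop (nhds 0) := by
    have h1 := tendsto_pow_atTop_nhds_zero_of_lt_one hδ0 hδ1
    simpa using h1.const_mul G'
  have h1 : |c| ≤ 0 := ge_of_tendsto' h0 h
  exact abs_eq_zero.mp (le_antisymm h1 (abs_nonneg c))


/-- at an optimal family, any signal sent with positive probability whose
recommended action differs from `a*` gives the principal a zero continuation value. -/
theorem optimal_family_zero_value_off_astar
    {A S : Type*} [Fintype A] [Nonempty A] [Fintype S]
    (u v : A → Bool → ℝ) (δ : ℝ) (astar : A)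
    (hδ : δ ∈ Set.Ioo (0 : ℝ) 1)
    (hS2 : 2 ≤ Fintype.card S) (hAS : Fintype.card A ≤ Fintype.card S)
    (hv0 : 0 < v astar false) (hv1 : 0 < v astar true)
    (hvz : ∀ a : A, a ≠ astar → v a false = 0 ∧ v a true = 0)
    (Vstar : ℝ × ℝ → ℝ) (hVb : BddOnW u Vstar)
    (hVfix : ∀ pw ∈ Wset u, bellman (S := S) u v δ Vstar pw = Vstar pw)
    (pw : ℝ × ℝ) (hpw : pw ∈ Wset u) (f : Fam A S)
    (hfeas : Feasible u δ pw f)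
    (hopt : famPayoff v δ Vstar f = bellman (S := S) u v δ Vstar pw) :
    ∀ s : S, 0 < f.prob s → f.act s ≠ astar → Vstar (f.belief s, f.promise s) = 0 := by
  classical
  obtain ⟨hδ0', hδ1'⟩ := hδ
  have hδ0 : (0:ℝ) ≤ δ := le_of_lt hδ0'
  have hδ1 : δ ≤ 1 := le_of_lt hδ1'
  obtain ⟨e⟩ : Nonempty (A ↪ S) := Function.Embedding.nonempty_of_card_le hAS
  obtain ⟨s0, s1, h01⟩ : ∃ a b : S, a ≠ b :=
    Fintype.exists_pair_of_one_lt_card (by omega)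
  have hv : ∀ (a : A) (b : Bool), 0 ≤ v a b := by
    intro a b
    by_cases h : a = astar
    · subst h; cases b
      · exact le_of_lt hv0
      · exact le_of_lt hv1
    · rcases hvz a h with ⟨h0, h1⟩; cases b
      · rw [h0]
      · rw [h1]
  obtain ⟨C, hC⟩ := hVb
  have hC0 : 0 ≤ C := le_trans (abs_nonneg _) (hC _ (Wset_basept u))
  -- value iteration from 0
  set Vs : ℕ → (ℝ × ℝ → ℝ) := fun n => (bellman (S := S) u v δ)^[n] (fun _ => 0) with hVs
  have hVssucc : ∀ n, Vs (n + 1) = bellman (S := S) u v δ (Vs n) := fun n =>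
    Function.iterate_succ_apply' _ _ _
  have hVs0 : ∀ z, Vs 0 z = 0 := fun z => rfl
  set CV : ℝ := KvB v with hCV
  have hCV0 : 0 ≤ CV := KvB_nonneg v
  have hVsprop : ∀ n, (∀ z ∈ Wset u, |Vs n z| ≤ CV) ∧ (∀ z ∈ Wset u, 0 ≤ Vs n z)
      ∧ ConcaveOn ℝ (Wset u) (Vs n) := by
    intro n
    induction n with
    | zero =>
        refine ⟨fun z _ => ?_, fun z _ => le_of_eq (hVs0 z).symm, ?_⟩
        · rw [hVs0]; simpa using hCV0
        · have hcc : ConcaveOn ℝ (Wset u) (fun (_ : ℝ × ℝ) => (0:ℝ)) :=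
            concaveOn_const 0 (Wset_convex u)
          exact hcc
    | succ n ih =>
        obtain ⟨ihb, ihn, ihc⟩ := ih
        refine ⟨fun z hz => ?_, fun z hz => ?_, ?_⟩
        · rw [hVssucc]
          have h1 := abs_bellman_le u v δ (Vs n) ihb hδ0 hδ1 h01 hz
          have h2 : (1 - δ) * KvB v + δ * CV ≤ CV := by rw [hCV]; nlinarith
          linarith
        · rw [hVssucc]
          exact bellman_nonneg u v δ (Vs n) ihb hv ihn hδ0 hδ1 h01 hz
        · rw [hVssucc]
          exact bellman_concaveOn u v δ (Vs n) e ihb hδ0 hδ1 h01 ihc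
  have hdiff1 : ∀ n, ∀ z ∈ Wset u, |Vs (n + 1) z - Vs n z| ≤ δ ^ n * CV := by
    intro n
    induction n with
    | zero =>
        intro z hz
        rw [pow_zero, one_mul, hVs0, sub_zero]
        exact (hVsprop 1).1 z hz
    | succ n ih =>
        intro z hz
        have h1 := bellman_contract u v δ (Vs (n+1)) (Vs n) (hVsprop (n+1)).1
          (hVsprop n).1 hδ0 hδ1 (mul_nonneg (pow_nonneg hδ0 n) hCV0) ih h01 hz
        rw [← hVssucc (n+1), ← hVssucc n] at h1
        exact le_trans h1 (le_of_eq (by ring))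
  have h1δ : (1:ℝ) - δ ≠ 0 := by linarith
  obtain ⟨G, hG0, hGid⟩ : ∃ G : ℝ, 0 ≤ G ∧ δ * G + CV = G :=
    ⟨CV / (1 - δ), div_nonneg hCV0 (by linarith), by field_simp; ring⟩
  have hclaim : ∀ k n, ∀ z ∈ Wset u, |Vs (n + k) z - Vs n z| ≤ δ ^ n * G := by
    intro k
    induction k with
    | zero =>
        intro n z hz
        simp only [Nat.add_zero, sub_self, abs_zero]
        exact mul_nonneg (pow_nonneg hδ0 n) hG0
    | succ k ih =>
        intro n z hz
        have h1 := ih (n+1) z hz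
        have h2 := hdiff1 n z hz
        have h3 : |Vs (n + (k+1)) z - Vs n z|
            ≤ |Vs ((n+1) + k) z - Vs (n+1) z| + |Vs (n+1) z - Vs n z| := by
          have he : n + (k+1) = (n+1) + k := by ring
          rw [he]
          exact abs_sub_le _ _ _
        have h4 : δ ^ (n+1) * G + δ ^ n * CV = δ ^ n * G := by
          linear_combination (δ ^ n) * hGid
        calc |Vs (n + (k+1)) z - Vs n z|
            ≤ δ ^ (n+1) * G + δ ^ n * CV := by linarith
          _ = δ ^ n * G := h4
  have hcauchy : ∀ z, z ∈ Wset u →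
      ∃ L, Filter.Tendsto (fun n => Vs n z) Filter.atTop (nhds L) := by
    intro z hz
    apply cauchySeq_tendsto_of_complete
    apply cauchySeq_of_le_geometric δ CV hδ1'
    intro n
    rw [Real.dist_eq, abs_sub_comm]
    calc |Vs (n+1) z - Vs n z| ≤ δ ^ n * CV := hdiff1 n z hz
      _ = CV * δ ^ n := mul_comm _ _
  set Vinf : ℝ × ℝ → ℝ := fun z =>
    if h : ∃ L, Filter.Tendsto (fun n => Vs n z) Filter.atTop (nhds L) then h.choose else 0
    with hVinfdef
  have htend : ∀ z ∈ Wset u, Filter.Tendsto (fun n => Vs n z) Filter.atTop (nhds (Vinf z)) := by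
    intro z hz
    have h := hcauchy z hz
    have hval : Vinf z = h.choose := by rw [hVinfdef]; exact dif_pos h
    rw [hval]
    exact h.choose_spec
  have hVinfb : ∀ z ∈ Wset u, |Vinf z| ≤ CV := fun z hz =>
    le_of_tendsto (htend z hz).abs (Filter.Eventually.of_forall fun n => (hVsprop n).1 z hz)
  have hVinfn : ∀ z ∈ Wset u, 0 ≤ Vinf z := fun z hz =>
    ge_of_tendsto (htend z hz) (Filter.Eventually.of_forall fun n => (hVsprop n).2.1 z hz)
  have hVinfc : ConcaveOn ℝ (Wset u) Vinf := by
    refine ⟨Wset_convex u, fun x hx y hy a b ha hb hab => ?_⟩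
    have hzm := Wset_convex u hx hy ha hb hab
    have h1 : Filter.Tendsto (fun n => a * Vs n x + b * Vs n y) Filter.atTop
        (nhds (a * Vinf x + b * Vinf y)) :=
      ((htend x hx).const_mul a).add ((htend y hy).const_mul b)
    simp only [smul_eq_mul]
    refine le_of_tendsto_of_tendsto' h1 (htend _ hzm) fun n => ?_
    have h2 := ((hVsprop n).2.2).2 hx hy ha hb hab
    simpa using h2
  have hunif : ∀ n, ∀ z ∈ Wset u, |Vinf z - Vs n z| ≤ δ ^ n * G := by
    intro n z hz
    have h3 : Filter.Tendsto (fun k => Vs (n + k) z) Filter.atTop (nhds (Vinf z)) := by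
      have h4 := (htend z hz).comp (Filter.tendsto_add_atTop_nat n)
      have h5 : (fun k => Vs (k + n) z) = fun k => Vs (n + k) z := by
        funext k; rw [add_comm]
      rw [← h5]
      exact h4
    have h2 : Filter.Tendsto (fun k => |Vs (n + k) z - Vs n z|) Filter.atTop
        (nhds |Vinf z - Vs n z|) := (h3.sub tendsto_const_nhds).abs
    exact le_of_tendsto h2 (Filter.Eventually.of_forall fun k => hclaim k n z hz)
  have hfixInf : ∀ z ∈ Wset u, bellman (S := S) u v δ Vinf z = Vinf z := by
    intro z hz
    have key : ∀ n : ℕ, |bellman (S := S) u v δ Vinf z - Vinf z| ≤ (2 * G * δ) * δ ^ n := by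
      intro n
      have h1 := bellman_contract u v δ Vinf (Vs n) hVinfb (hVsprop n).1 hδ0 hδ1
        (mul_nonneg (pow_nonneg hδ0 n) hG0) (hunif n) h01 hz
      have h3 : bellman (S := S) u v δ (Vs n) z = Vs (n+1) z := (by rw [hVssucc])
      rw [h3] at h1
      have h2 := hunif (n+1) z hz
      calc |bellman (S := S) u v δ Vinf z - Vinf z|
          ≤ |bellman (S := S) u v δ Vinf z - Vs (n+1) z| + |Vs (n+1) z - Vinf z| :=
            abs_sub_le _ _ _
        _ ≤ δ * (δ ^ n * G) + δ ^ (n+1) * G := by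
            rw [abs_sub_comm (Vs (n+1) z)]
            linarith
        _ = (2 * G * δ) * δ ^ n := by ring
    exact sub_eq_zero.mp (zero_of_abs_le_geom hδ0 hδ1' key)
  have hVV : ∀ z ∈ Wset u, Vstar z = Vinf z := by
    have hB : ∀ n, ∀ z ∈ Wset u, |Vstar z - Vinf z| ≤ (C + CV) * δ ^ n := by
      intro n
      induction n with
      | zero =>
          intro z hz
          rw [pow_zero, mul_one]
          calc |Vstar z - Vinf z| ≤ |Vstar z| + |Vinf z| := abs_sub _ _
            _ ≤ C + CV := add_le_add (hC z hz) (hVinfb z hz)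
      | succ n ih =>
          intro z hz
          rw [← hVfix z hz, ← hfixInf z hz]
          have h1 := bellman_contract u v δ Vstar Vinf hC hVinfb hδ0 hδ1
            (mul_nonneg (pow_nonneg hδ0 n) (by linarith : (0:ℝ) ≤ C + CV)) (fun y hy => by
              calc |Vstar y - Vinf y| ≤ (C + CV) * δ ^ n := ih y hy
                _ = δ ^ n * (C + CV) := mul_comm _ _) h01 hz
          calc |bellman (S := S) u v δ Vstar z - bellman (S := S) u v δ Vinf z|
              ≤ δ * (δ ^ n * (C + CV)) := h1
            _ = (C + CV) * δ ^ (n+1) := by ring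
    intro z hz
    exact sub_eq_zero.mp (zero_of_abs_le_geom hδ0 hδ1' fun n => hB n z hz)
  have hVstarc : ConcaveOn ℝ (Wset u) Vstar := by
    refine ⟨Wset_convex u, fun x hx y hy a b ha hb hab => ?_⟩
    have h := hVinfc.2 hx hy ha hb hab
    rw [hVV x hx, hVV y hy, hVV _ (Wset_convex u hx hy ha hb hab)]
    exact h
  have hVstarn : ∀ z ∈ Wset u, 0 ≤ Vstar z := fun z hz => (hVV z hz) ▸ hVinfn z hz
  -- main argument
  intro s hps hacts
  have hqx : (f.belief s, f.promise s) ∈ Wset u := hfeas.2.1 s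
  by_contra hne
  have hcpos : 0 < Vstar (f.belief s, f.promise s) :=
    lt_of_le_of_ne (hVstarn _ hqx) (Ne.symm hne)
  have hbc : bellman (S := S) u v δ Vstar (f.belief s, f.promise s)
      = Vstar (f.belief s, f.promise s) := hVfix _ hqx
  have hlt : δ * Vstar (f.belief s, f.promise s) < Vstar (f.belief s, f.promise s) := by
    nlinarith
  obtain ⟨t, ht, htgt⟩ := exists_lt_of_lt_csSup
    (bellman_set_nonempty (S := S) u v δ Vstar h01 hqx)
    (show δ * Vstar (f.belief s, f.promise s)
      < bellman (S := S) u v δ Vstar (f.belief s, f.promise s) by rw [hbc]; exact hlt)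
  obtain ⟨g, hgfeas, rfl⟩ := ht
  obtain ⟨hfp, hfW, hfO, hfPK, hfB, hfT⟩ := hfeas
  obtain ⟨hgp, hgW, hgO, hgPK, hgB, hgT⟩ := hgfeas
  set lam := f.prob s with hlamdef
  -- spliced family on S ⊕ S
  set sp : Fam A (S ⊕ S) :=
    ⟨Sum.elim (fun s' => if s' = s then 0 else f.prob s') (fun t' => lam * g.prob t'),
     Sum.elim f.belief g.belief, Sum.elim f.promise g.promise, Sum.elim f.act g.act⟩
    with hspdef
  have hzf : ∀ H : S → ℝ, (∑ s', (if s' = s then 0 else f.prob s') * H s')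
      = (∑ s', f.prob s' * H s') - f.prob s * H s := by
    intro H
    have h1 : ∀ s', (if s' = s then 0 else f.prob s') * H s'
        = f.prob s' * H s' - (if s' = s then f.prob s' * H s' else 0) := by
      intro s'
      by_cases h : s' = s
      · subst h; simp
      · simp [h]
    rw [Finset.sum_congr rfl fun s' _ => h1 s', Finset.sum_sub_distrib,
      Finset.sum_ite_eq' Finset.univ s (fun s' => f.prob s' * H s')]
    simp
  have hrg : ∀ H : S → ℝ, (∑ t', (lam * g.prob t') * H t') = lam * ∑ t', g.prob t' * H t' := by
    intro H
    rw [Finset.mul_sum]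
    exact Finset.sum_congr rfl fun t' _ => by ring
  have hds : (1 - δ) * euP u (f.act s) (f.belief s) + δ * f.promise s ≤ f.promise s := by
    have h1 := euP_le_mFun u (f.act s) (f.belief s)
    have h2 := (hfW s).2.1
    nlinarith
  have hlam0 : 0 ≤ lam := (hfp s).1
  have spfeas : Feasible u δ pw sp := by
    refine ⟨?_, ?_, ?_, ?_, ?_, ?_⟩
    · rintro (s' | t') <;> simp only [hspdef, Sum.elim_inl, Sum.elim_inr, Set.mem_Icc]
      · by_cases h : s' = s
        · simp only [h, if_pos rfl, eq_self_iff_true, if_true]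
          constructor <;> norm_num
        · simp only [if_neg h]
          exact ⟨(hfp s').1, (hfp s').2⟩
      · have h1 := (hgp t').1
        have h2 := (hgp t').2
        have h3 := (hfp s).2
        constructor
        · positivity
        · nlinarith
    · rintro (s' | t') <;> simp only [hspdef, Sum.elim_inl, Sum.elim_inr]
      exacts [hfW s', hgW t']
    · rintro (s' | t') <;> simp only [hspdef, Sum.elim_inl, Sum.elim_inr]
      exacts [hfO s', hgO t']
    · rw [ge_iff_le, Fintype.sum_sum_type]
      simp only [hspdef, Sum.elim_inl, Sum.elim_inr]
      rw [hzf (fun s' => (1 - δ) * euP u (f.act s') (f.belief s') + δ * f.promise s'),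
        hrg (fun t' => (1 - δ) * euP u (g.act t') (g.belief t') + δ * g.promise t')]
      have h1 : (f.belief s, f.promise s).2 ≤ ∑ t', g.prob t' * ((1 - δ) * euP u (g.act t')
          (g.belief t') + δ * g.promise t') := hgPK
      simp only at h1
      have h2 : lam * f.promise s ≤ lam * ∑ t', g.prob t' * ((1 - δ) * euP u (g.act t')
          (g.belief t') + δ * g.promise t') := mul_le_mul_of_nonneg_left h1 hlam0
      have h3 : lam * ((1 - δ) * euP u (f.act s) (f.belief s) + δ * f.promise s)
          ≤ lam * f.promise s := mul_le_mul_of_nonneg_left hds hlam0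
      have h4 : pw.2 ≤ ∑ s', f.prob s' * ((1 - δ) * euP u (f.act s') (f.belief s')
          + δ * f.promise s') := hfPK
      rw [hlamdef] at h2 h3
      linarith
    · rw [Fintype.sum_sum_type]
      simp only [hspdef, Sum.elim_inl, Sum.elim_inr]
      rw [hzf f.belief, hrg g.belief]
      have h1 : ∑ t', g.prob t' * g.belief t' = f.belief s := hgB
      rw [h1, hfB, hlamdef]
      ring
    · rw [Fintype.sum_sum_type]
      simp only [hspdef, Sum.elim_inl, Sum.elim_inr]
      have h1 : (∑ s', (if s' = s then 0 else f.prob s') * 1)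
          = (∑ s', f.prob s' * 1) - f.prob s * 1 := hzf (fun _ => 1)
      simp only [mul_one] at h1
      have h2 : (∑ t', (lam * g.prob t') * 1) = lam * ∑ t', g.prob t' * 1 := hrg (fun _ => 1)
      simp only [mul_one] at h2
      rw [h1, h2, hfT, hgT, hlamdef]
      ring
  have hveq : euP v (f.act s) (f.belief s) = 0 := by
    obtain ⟨ha0, ha1⟩ := hvz _ hacts
    simp [euP, ha0, ha1]
  have hsp_pay : famPayoff v δ Vstar sp
      = famPayoff v δ Vstar f - lam * (δ * Vstar (f.belief s, f.promise s))
        + lam * famPayoff v δ Vstar g := by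
    rw [famPayoff, Fintype.sum_sum_type]
    simp only [hspdef, Sum.elim_inl, Sum.elim_inr]
    rw [hzf (fun s' => (1 - δ) * euP v (f.act s') (f.belief s')
        + δ * Vstar (f.belief s', f.promise s')),
      hrg (fun t' => (1 - δ) * euP v (g.act t') (g.belief t')
        + δ * Vstar (g.belief t', g.promise t'))]
    rw [famPayoff, famPayoff, hveq, hlamdef]
    ring
  obtain ⟨f', hf'feas, hf'pay⟩ := compress u v δ Vstar e hδ0 hδ1 hVstarc hpw spfeas
  have h1 : famPayoff v δ Vstar f' ≤ bellman (S := S) u v δ Vstar pw :=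
    le_bellman u v δ Vstar hC hδ0 hδ1 hf'feas
  have h2 : lam * (δ * Vstar (f.belief s, f.promise s)) < lam * famPayoff v δ Vstar g :=
    mul_lt_mul_of_pos_left htgt hps
  linarith [hopt, hsp_pay, hf'pay, h1, h2]
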